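/- With the setup above, if γ in Γ \ Δ realizes a v-cut over Δ and γ* in Γ \ Δ realizes the same cut as γ over Δ, then γ* also realizes a v-cut over Δ. -/

import Mathlib

open scoped Classical

/-! Hahn groups `ℝ((t^S))` over a linearly ordered set `S`, realized as `HahnSeries Sᵒᵈ ℝ`
(exponents are dualized so that the decreasing series of the classical notation have
well-ordered support), together with developments of elements of an ordered abelian
group `Γ` over a subgroup `Δ` embedded in the Hahn group. -/

variable {S : Type*} [LinearOrder S] {Γ : Type*} [AddCommGroup Γ] [LinearOrder Γ] [IsOrderedAddMonoid Γ]

/-- `a ≺ b` : `n|a| < |b|` for every natural number `n`. -/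
def GPrec (a b : Γ) : Prop := ∀ n : ℕ, n • |a| < |b|

/-- `a ⪯ b` : `|a| < n|b|` for some natural number `n`. -/
def GPreceq (a b : Γ) : Prop := ∃ n : ℕ, |a| < n • |b|

/-- Archimedean equivalence. -/
def GEquiv (a b : Γ) : Prop := GPreceq a b ∧ GPreceq b a

/-- A Hahn series is positive when its leading coefficient is positive. -/
def HPosS (h : HahnSeries Sᵒᵈ ℝ) : Prop :=
  ∃ g, 0 < h.coeff g ∧ ∀ g' < g, h.coeff g' = 0

/-- The (lexicographic) ordering of the Hahn group. -/
def HLtS (h k : HahnSeries Sᵒᵈ ℝ) : Prop := HPosS (k - h)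

/-- `d` is a truncation (initial segment of terms) of the Hahn series `h`. -/
def IsTruncS (d h : HahnSeries Sᵒᵈ ℝ) : Prop :=
  ∃ U : Set S, IsUpperSet U ∧
    ∀ s : S, d.coeff (OrderDual.toDual s) = if s ∈ U then h.coeff (OrderDual.toDual s) else 0

/-- The truncation of `z` keeping all terms with exponent `≥ s`. -/
noncomputable def truncFrom (z : HahnSeries Sᵒᵈ ℝ) (s : S) : HahnSeries Sᵒᵈ ℝ where
  coeff g := if s ≤ OrderDual.ofDual g then z.coeff g else 0
  isPWO_support' := z.isPWO_support.mono (fun g hg => by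
    simp only [Function.mem_support] at hg ⊢
    intro h0
    apply hg
    simp [h0])

variable (Δ : AddSubgroup Γ) (ι : Δ → HahnSeries Sᵒᵈ ℝ)

/-- `ι` is a truncation closed, cross sectional ordered group embedding of `Δ`
into the Hahn group. -/
structure GoodEmbedding : Prop where
  add : ∀ a b : Δ, ι (a + b) = ι a + ι b
  mono : ∀ a b : Δ, ((a : Γ) < b ↔ HLtS (ι a) (ι b))
  trunc_closed : ∀ (d : Δ) (w : HahnSeries Sᵒᵈ ℝ), IsTruncS w (ι d) → ∃ d' : Δ, ι d' = w
  cross : ∀ s : S, ∃ d : Δ, ι d = HahnSeries.single (OrderDual.toDual s) 1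

/-- `z` is a partial development of `y` over `Δ` with respect to `ι`. -/
def IsPartialDev (y : Γ) (z : HahnSeries Sᵒᵈ ℝ) : Prop :=
  ∀ s : S, z.coeff (OrderDual.toDual s) ≠ 0 →
    ∃ d e : Δ, ι d = truncFrom z s ∧ ι e = HahnSeries.single (OrderDual.toDual s) 1 ∧
      GPrec ((d : Γ) - y) (e : Γ)

/-- `z` is the (maximal) development of `y` over `Δ` with respect to `ι`. -/
def IsDevelopment (y : Γ) (z : HahnSeries Sᵒᵈ ℝ) : Prop :=
  IsPartialDev Δ ι y z ∧ ∀ z', IsPartialDev Δ ι y z' → IsTruncS z' z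

/-- `γ ∈ Γ \ Δ` realizes a `v`-cut over `Δ`: its development lies in `ι(Δ)` and the
difference of `γ` with (the preimage of) its development is Archimedean-equivalent to
no element of `Δ`. -/
def RealizesVCut (γ : Γ) : Prop :=
  γ ∉ Δ ∧ ∃ (z : HahnSeries Sᵒᵈ ℝ) (d : Δ), IsDevelopment Δ ι γ z ∧ ι d = z ∧
    ∀ δ : Δ, ¬ GEquiv (γ - (d : Γ)) (δ : Γ)

section Helpers

variable {S : Type*} [LinearOrder S] {Γ : Type*} [AddCommGroup Γ] [LinearOrder Γ] [IsOrderedAddMonoid Γ]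

lemma gprec_neg' {a c : Γ} (h : GPrec a c) : GPrec (-a) c := by
  intro n; simpa [abs_neg] using h n

lemma gprec_of_forall_le' {a b : Γ} (h : ∀ n : ℕ, n • |a| ≤ |b|) (ha : a ≠ 0) : GPrec a b := by
  intro n
  have h1 : n • |a| < (n + 1) • |a| := by
    have h0 : (0:Γ) < |a| := abs_pos.2 ha
    calc n • |a| = n • |a| + 0 := (add_zero _).symm
      _ < n • |a| + |a| := add_lt_add_right h0 _
      _ = (n + 1) • |a| := by rw [add_nsmul, one_nsmul]
  exact lt_of_lt_of_le h1 (h (n + 1))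

lemma gprec_add' {a b c : Γ} (ha : GPrec a c) (hb : GPrec b c) : GPrec (a + b) c := by
  intro n
  by_contra hno
  push_neg at hno
  have h2 : (2 * n) • |a + b| ≤ (2 * n) • |a| + (2 * n) • |b| := by
    calc (2 * n) • |a + b| ≤ (2 * n) • (|a| + |b|) := nsmul_le_nsmul_right (abs_add_le a b) _
      _ = _ := smul_add _ _ _
  have h3 : |c| + |c| ≤ (2 * n) • |a + b| := by
    calc |c| + |c| ≤ n • |a + b| + n • |a + b| := add_le_add hno hno
      _ = (2 * n) • |a + b| := by rw [two_mul, add_nsmul]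
  have h4 : (2 * n) • |a| + (2 * n) • |b| < |c| + |c| := add_lt_add (ha _) (hb _)
  exact absurd (lt_of_le_of_lt h2 h4) (not_lt.2 h3)

lemma nsmul_lt_nsmul_cancel' {a b : Γ} (n : ℕ) (h : n • a < n • b) : a < b := by
  by_contra hba
  push_neg at hba
  exact absurd h (not_lt.2 (nsmul_le_nsmul_right hba n))

lemma pos_of_nsmul_pos' {a : Γ} {n : ℕ} (h : 0 < n • a) : 0 < a := by
  by_contra ha
  push_neg at ha
  have h2 : n • a ≤ 0 := by
    calc n • a ≤ n • (0:Γ) := nsmul_le_nsmul_right ha n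
      _ = 0 := smul_zero n
  exact absurd h (not_lt.2 h2)

lemma nsmul_coeff' (n : ℕ) (w : HahnSeries Sᵒᵈ ℝ) (g : Sᵒᵈ) :
    (n • w).coeff g = n • (w.coeff g) := by
  induction n with
  | zero => simp
  | succ k ih => rw [add_nsmul, add_nsmul, one_nsmul, one_nsmul, HahnSeries.coeff_add, ih]

lemma hpos_single_sub' {s : S} {w : HahnSeries Sᵒᵈ ℝ}
    (hw : ∀ g : Sᵒᵈ, s ≤ OrderDual.ofDual g → w.coeff g = 0) :
    HPosS (HahnSeries.single (OrderDual.toDual s) 1 - w) := by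
  refine ⟨OrderDual.toDual s, ?_, ?_⟩
  · rw [HahnSeries.coeff_sub, hw (OrderDual.toDual s) le_rfl, HahnSeries.coeff_single_same]
    norm_num
  · intro g hg
    have hs : s < OrderDual.ofDual g := hg
    have hne : g ≠ OrderDual.toDual s := ne_of_lt hg
    rw [HahnSeries.coeff_sub, hw g hs.le, HahnSeries.coeff_single_of_ne hne, sub_zero]

end Helpers

theorem vCut_depends_only_on_cut
    (hΓdiv : ∀ n : ℕ, 0 < n → ∀ g : Γ, ∃ g', n • g' = g)
    (hΔdiv : ∀ n : ℕ, 0 < n → ∀ d ∈ Δ, ∃ d' ∈ Δ, n • d' = d)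
    (hι : GoodEmbedding Δ ι)
    (γ γstar : Γ) (hγ : RealizesVCut Δ ι γ)
    (hγs : γstar ∉ Δ)
    (hcut : ∀ d : Δ, ((d : Γ) < γ ↔ (d : Γ) < γstar)) :
    RealizesVCut Δ ι γstar := by
  obtain ⟨hγΔ, z, d, ⟨hP, hMax⟩, hιd, hne⟩ := hγ
  -- basic facts about ι
  have hι0 : ι 0 = 0 := by
    have h := hι.add 0 0
    rw [add_zero] at h
    exact left_eq_add.1 h
  have hιneg : ∀ a : Δ, ι (-a) = - ι a := by
    intro a
    have h := hι.add a (-a)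
    rw [add_neg_cancel, hι0] at h
    exact eq_neg_of_add_eq_zero_right h.symm
  have hιnsmul : ∀ (n : ℕ) (a : Δ), ι (n • a) = n • ι a := by
    intro n a
    induction n with
    | zero => simpa using hι0
    | succ k ih => rw [add_nsmul, add_nsmul, one_nsmul, one_nsmul, hι.add, ih]
  have hιsub : ∀ a b : Δ, ι (a - b) = ι a - ι b := by
    intro a b
    rw [sub_eq_add_neg, sub_eq_add_neg, hι.add, hιneg]
  -- nonvanishing of the two differences
  have hγne : γ ≠ (d : Γ) := fun h => hγΔ (h ▸ d.2)
  have hγsne : γstar ≠ (d : Γ) := fun h => hγs (h ▸ d.2)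
  have hε0 : γ - (d : Γ) ≠ 0 := sub_ne_zero.2 hγne
  have hεs0 : γstar - (d : Γ) ≠ 0 := sub_ne_zero.2 hγsne
  -- positivity of cross-section elements
  have hpos_single : ∀ (e : Δ) (s : S),
      ι e = HahnSeries.single (OrderDual.toDual s) 1 → 0 < (e : Γ) := by
    intro e s hes
    have h : HLtS (ι 0) (ι e) := by
      rw [hι0, hes]
      have := hpos_single_sub' (s := s) (w := (0 : HahnSeries Sᵒᵈ ℝ)) (fun g _ => rfl)
      simpa [HLtS] using this
    have h2 := (hι.mono 0 e).2 h
    simpa using h2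
  -- elements of Δ whose image is supported strictly below s are ≺ the cross-section at s
  have htail : ∀ (dd e : Δ) (s : S), ι e = HahnSeries.single (OrderDual.toDual s) 1 →
      (∀ g : Sᵒᵈ, s ≤ OrderDual.ofDual g → (ι dd).coeff g = 0) →
      GPrec (dd : Γ) (e : Γ) := by
    intro dd e s hes hcoeff n
    have hepos := hpos_single e s hes
    rw [abs_of_pos hepos, ← abs_nsmul, abs_lt]
    have key : ∀ b : Δ, ι b = n • ι dd ∨ ι b = -(n • ι dd) → (b : Γ) < (e : Γ) := by
      intro b hb
      refine (hι.mono b e).2 ?_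
      rw [hes]
      unfold HLtS
      apply hpos_single_sub'
      intro g hg
      rcases hb with hb | hb <;> rw [hb] <;>
        simp [nsmul_coeff', hcoeff g hg]
    constructor
    · have h1 := key (-(n • dd)) (Or.inr (by rw [hιneg, hιnsmul]))
      have h2 : ((-(n • dd) : Δ) : Γ) = -(n • (dd : Γ)) := by push_cast; ring
      rw [h2] at h1
      exact neg_lt.mp h1
    · have h1 := key (n • dd) (Or.inl (by rw [hιnsmul]))
      have h2 : (((n • dd) : Δ) : Γ) = n • (dd : Γ) := by push_cast; ring
      rw [h2] at h1
      exact h1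
  -- positive representative of |δ| inside Δ
  have habsmem : ∀ δ : Δ, ∃ δa : Δ, (δa : Γ) = |(δ : Γ)| := by
    intro δ
    rcases le_or_gt 0 (δ : Γ) with h | h
    · exact ⟨δ, (abs_of_nonneg h).symm⟩
    · exact ⟨-δ, by rw [AddSubgroup.coe_neg, abs_of_neg h]⟩
  -- Lemma A : γ and γstar are closer than any positive element of Δ that dominates ε
  have lemA : ∀ δ : Δ, 0 < (δ : Γ) → GPrec (γ - (d : Γ)) (δ : Γ) → |γstar - γ| < (δ : Γ) := by
    intro δ hδ hpre
    obtain ⟨c, hcΔ, hc⟩ := hΔdiv 2 two_pos (δ : Γ) δ.2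
    set c' : Δ := ⟨c, hcΔ⟩ with hc'def
    have hc2 : (2 : ℕ) • (c' : Γ) = (δ : Γ) := hc
    have hcpos : 0 < (c' : Γ) := pos_of_nsmul_pos' (n := 2) (by rw [hc2]; exact hδ)
    have hprec : GPrec (γ - (d : Γ)) (c' : Γ) := by
      intro n
      have h2 := hpre (2 * n)
      rw [abs_of_pos hδ] at h2
      rw [abs_of_pos hcpos]
      refine nsmul_lt_nsmul_cancel' 2 ?_
      calc (2 : ℕ) • (n • |γ - (d : Γ)|) = (2 * n) • |γ - (d : Γ)| := smul_smul 2 n _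
        _ < (δ : Γ) := h2
        _ = (2 : ℕ) • (c' : Γ) := hc2.symm
    have hεc : |γ - (d : Γ)| < (c' : Γ) := by
      simpa [abs_of_pos hcpos] using hprec 1
    by_contra hno
    push_neg at hno
    rcases le_abs.1 hno with hge | hge
    · -- (δ : Γ) ≤ γstar - γ : then d + c' separates γ and γstar
      have h1 : ¬ (((d + c' : Δ) : Γ) < γ) := by
        push_cast
        have : γ - (d : Γ) < (c' : Γ) := lt_of_le_of_lt (le_abs_self _) hεc
        exact not_lt.2 (le_of_lt (sub_lt_iff_lt_add'.1 this))
      have h2 : ((d + c' : Δ) : Γ) < γstar := by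
        push_cast
        have ha : (d : Γ) - γ < (c' : Γ) :=
          lt_of_le_of_lt (le_abs_self _) (by rwa [abs_sub_comm] at hεc)
        have hb : (d : Γ) < γ + (c' : Γ) := sub_lt_iff_lt_add'.1 ha
        have hcc : (d : Γ) + (c' : Γ) < γ + (c' : Γ) + (c' : Γ) := by
          exact add_lt_add_left hb _
        have hdd : γ + (c' : Γ) + (c' : Γ) = γ + (δ : Γ) := by
          rw [← hc2, two_nsmul]; abel
        have hee : γ + (δ : Γ) ≤ γstar := by
          rw [← sub_nonneg]
          have : γstar - (γ + (δ : Γ)) = (γstar - γ) - (δ : Γ) := by abel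
          rw [this, sub_nonneg]
          exact hge
        exact lt_of_lt_of_le (hdd ▸ hcc) hee
      exact h1 ((hcut (d + c')).2 h2)
    · -- (δ : Γ) ≤ γ - γstar : then d - c' separates γstar and γ
      have h1 : ((d - c' : Δ) : Γ) < γ := by
        push_cast
        have ha : (d : Γ) - γ < (c' : Γ) :=
          lt_of_le_of_lt (le_abs_self _) (by rwa [abs_sub_comm] at hεc)
        rw [sub_lt_iff_lt_add, add_comm]
        exact sub_lt_iff_lt_add.1 ha
      have h2 : ¬ (((d - c' : Δ) : Γ) < γstar) := by
        push_cast
        have ha : γ - (d : Γ) < (c' : Γ) := lt_of_le_of_lt (le_abs_self _) hεc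
        have hge' : (δ : Γ) ≤ γ - γstar := by rwa [neg_sub] at hge
        have hb : γstar ≤ γ - (δ : Γ) := by
          rw [← sub_nonneg]
          have : γ - (δ : Γ) - γstar = (γ - γstar) - (δ : Γ) := by abel
          rw [this, sub_nonneg]
          exact hge'
        refine not_lt.2 (le_trans hb ?_)
        have : γ - (δ : Γ) = γ - (c' : Γ) - (c' : Γ) := by
          rw [← hc2, two_nsmul]; abel
        rw [this]
        have : γ - (c' : Γ) ≤ (d : Γ) := by
          rw [sub_le_iff_le_add]
          exact le_of_lt (sub_lt_iff_lt_add'.1 ha)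
        exact sub_le_sub_right this _
      exact h2 ((hcut (d - c')).1 h1)
  -- Lemma B : γstar - γ is ≺ any positive element of Δ that dominates ε
  have lemB : ∀ δ : Δ, 0 < (δ : Γ) → GPrec (γ - (d : Γ)) (δ : Γ) →
      GPrec (γstar - γ) (δ : Γ) := by
    intro δ hδ hpre n
    obtain ⟨c, hcΔ, hc⟩ := hΔdiv (n + 1) n.succ_pos (δ : Γ) δ.2
    set c' : Δ := ⟨c, hcΔ⟩ with hc'def
    have hc2 : (n + 1) • (c' : Γ) = (δ : Γ) := hc
    have hcpos : 0 < (c' : Γ) := pos_of_nsmul_pos' (n := n + 1) (by rw [hc2]; exact hδ)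
    have hprec : GPrec (γ - (d : Γ)) (c' : Γ) := by
      intro m
      have h2 := hpre ((n + 1) * m)
      rw [abs_of_pos hδ] at h2
      rw [abs_of_pos hcpos]
      refine nsmul_lt_nsmul_cancel' (n + 1) ?_
      calc (n + 1) • (m • |γ - (d : Γ)|) = ((n + 1) * m) • |γ - (d : Γ)| := smul_smul _ _ _
        _ < (δ : Γ) := h2
        _ = (n + 1) • (c' : Γ) := hc2.symm
    have hA := lemA c' hcpos hprec
    rw [abs_of_pos hδ, ← hc2]
    calc n • |γstar - γ| ≤ n • (c' : Γ) := nsmul_le_nsmul_right hA.le n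
      _ < (n + 1) • (c' : Γ) := nsmul_lt_nsmul_left hcpos (Nat.lt_succ_self n)
  -- Lemma C : no positive element of Δ dominated by ε can dominate γstar - d
  have lemC : ∀ δ : Δ, 0 < (δ : Γ) → |γstar - (d : Γ)| < (δ : Γ) →
      GPrec (δ : Γ) (γ - (d : Γ)) → False := by
    intro δ hδ habs hprec
    have h1 : (δ : Γ) < |γ - (d : Γ)| := by
      simpa [abs_of_pos hδ] using hprec 1
    rcases (sub_ne_zero.2 hγne).lt_or_gt with hneg | hpos
    · -- γ - d < 0 : then d - δ separates γ and γstar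
      rw [abs_of_neg hneg, neg_sub] at h1
      have ha : ((d - δ : Δ) : Γ) < γstar := by
        push_cast
        have hb : (d : Γ) - γstar ≤ |γstar - (d : Γ)| := by
          rw [abs_sub_comm]; exact le_abs_self _
        have : (d : Γ) - γstar < (δ : Γ) := lt_of_le_of_lt hb habs
        rw [sub_lt_iff_lt_add] at this ⊢
        rw [add_comm]
        exact this
      have hb : ¬ (((d - δ : Δ) : Γ) < γ) := by
        push_cast
        refine not_lt.2 ?_
        rw [le_sub_iff_add_le]
        have h2 := lt_sub_iff_add_lt.1 h1
        rw [add_comm] at h2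
        exact le_of_lt h2
      exact hb ((hcut (d - δ)).2 ha)
    · -- γ - d > 0 : then d + δ separates γstar and γ
      rw [abs_of_pos hpos] at h1
      have ha : ((d + δ : Δ) : Γ) < γ := by
        push_cast
        have h2 := lt_sub_iff_add_lt.1 h1
        rwa [add_comm] at h2
      have hb : ¬ (((d + δ : Δ) : Γ) < γstar) := by
        push_cast
        refine not_lt.2 ?_
        have hc : γstar - (d : Γ) ≤ |γstar - (d : Γ)| := le_abs_self _
        have : γstar - (d : Γ) < (δ : Γ) := lt_of_le_of_lt hc habs
        rw [sub_lt_iff_lt_add'] at this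
        exact le_of_lt this
      exact hb ((hcut (d + δ)).1 ha)
  -- Claim 2 : γstar - d is equivalent to no element of Δ
  have hnes : ∀ δ : Δ, ¬ GEquiv (γstar - (d : Γ)) (δ : Γ) := by
    rintro δ ⟨⟨m, hm⟩, ⟨k, hk⟩⟩
    have hδ0 : (δ : Γ) ≠ 0 := by
      intro h
      rw [h] at hm
      simp at hm
      exact absurd (lt_of_le_of_lt (abs_nonneg _) hm) (lt_irrefl 0)
    obtain ⟨δa, hδa⟩ := habsmem δ
    have hδapos : 0 < (δa : Γ) := by rw [hδa]; exact abs_pos.2 hδ0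
    rcases not_and_or.1 (hne δ) with hc1 | hc2
    · -- case : every multiple of δ is ≤ |ε| ; use lemC with m • δa
      have hall : ∀ n : ℕ, n • |(δ : Γ)| ≤ |γ - (d : Γ)| := by
        intro n
        by_contra hn
        exact hc1 ⟨n, by push_neg at hn; exact hn⟩
      have hm0 : 0 < m := by
        rcases Nat.eq_zero_or_pos m with h | h
        · exfalso
          rw [h] at hm
          simp at hm
          exact absurd (lt_of_le_of_lt (abs_nonneg _) hm) (lt_irrefl 0)
        · exact h
      have hco : ((m • δa : Δ) : Γ) = m • (δa : Γ) := by push_cast; ring_nf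
      have hpos' : 0 < m • (δa : Γ) := nsmul_pos hδapos hm0.ne'
      refine lemC (m • δa) (by rw [hco]; exact hpos') (by rw [hco, hδa]; exact hm) ?_
      rw [hco]
      refine gprec_of_forall_le' (fun n => ?_) hpos'.ne'
      have habs2 : |m • (δa : Γ)| = m • |(δ : Γ)| := by
        rw [abs_nsmul, hδa, abs_abs]
      rw [habs2, smul_smul]
      exact hall _
    · -- case : every multiple of ε is ≤ |δ| ; ε ≺ δ, contradiction via lemA
      have hall2 : ∀ n : ℕ, n • |γ - (d : Γ)| ≤ |(δ : Γ)| := by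
        intro n
        by_contra hn
        exact hc2 ⟨n, by push_neg at hn; exact hn⟩
      have hk0 : 0 < k := by
        rcases Nat.eq_zero_or_pos k with h | h
        · exfalso
          rw [h] at hk
          simp at hk
          exact absurd (lt_of_le_of_lt (abs_nonneg _) hk) (lt_irrefl 0)
        · exact h
      obtain ⟨c, hcΔ, hc⟩ := hΔdiv (4 * k) (by positivity) (δa : Γ) δa.2
      set c' : Δ := ⟨c, hcΔ⟩ with hc'def
      have hc2' : (4 * k) • (c' : Γ) = |(δ : Γ)| := by rw [← hδa]; exact hc
      have hcpos : 0 < (c' : Γ) := pos_of_nsmul_pos' (n := 4 * k)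
        (by rw [hc2']; exact abs_pos.2 hδ0)
      have hεpos : 0 < |γ - (d : Γ)| := abs_pos.2 hε0
      have hprec : GPrec (γ - (d : Γ)) (c' : Γ) := by
        intro n
        rw [abs_of_pos hcpos]
        refine nsmul_lt_nsmul_cancel' (4 * k) ?_
        calc (4 * k) • (n • |γ - (d : Γ)|) = (4 * k * n) • |γ - (d : Γ)| := smul_smul _ _ _
          _ < (4 * k * n + 1) • |γ - (d : Γ)| := nsmul_lt_nsmul_left hεpos (Nat.lt_succ_self _)
          _ ≤ |(δ : Γ)| := hall2 _
          _ = (4 * k) • (c' : Γ) := hc2'.symm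
      have hA := lemA c' hcpos hprec
      have hεc : |γ - (d : Γ)| < (c' : Γ) := by
        simpa [abs_of_pos hcpos] using hprec 1
      have hle : |γstar - (d : Γ)| ≤ (c' : Γ) + (c' : Γ) := by
        have hdecomp : γstar - (d : Γ) = (γ - (d : Γ)) + (γstar - γ) := by abel
        calc |γstar - (d : Γ)| ≤ |γ - (d : Γ)| + |γstar - γ| := by
              rw [hdecomp]; exact abs_add_le _ _
          _ ≤ (c' : Γ) + (c' : Γ) := add_le_add hεc.le hA.le
      have hfinal : |(δ : Γ)| < |(δ : Γ)| := by
        calc |(δ : Γ)| < k • |γstar - (d : Γ)| := hk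
          _ ≤ k • ((c' : Γ) + (c' : Γ)) := nsmul_le_nsmul_right hle k
          _ = (2 * k) • (c' : Γ) := by
              rw [smul_add, ← add_nsmul, two_mul]
          _ < (4 * k) • (c' : Γ) := nsmul_lt_nsmul_left hcpos (by omega)
          _ = |(δ : Γ)| := hc2'
      exact absurd hfinal (lt_irrefl _)
  -- Claim 1a : z is a partial development of γstar
  have hPs : IsPartialDev Δ ι γstar z := by
    intro s hs
    obtain ⟨ds, es, hds, hes, hprec⟩ := hP s hs
    refine ⟨ds, es, hds, hes, ?_⟩
    have hespos := hpos_single es s hes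
    have htl : GPrec ((d : Γ) - (ds : Γ)) (es : Γ) := by
      have h0 : GPrec ((d - ds : Δ) : Γ) (es : Γ) := by
        refine htail (d - ds) es s hes ?_
        intro g hg
        rw [hιsub, hιd, hds, HahnSeries.coeff_sub]
        have hcoeff : (truncFrom z s).coeff g =
            if s ≤ OrderDual.ofDual g then z.coeff g else 0 := rfl
        rw [hcoeff, if_pos hg, sub_self]
      have hco : ((d - ds : Δ) : Γ) = (d : Γ) - (ds : Γ) := by push_cast; ring_nf
      rwa [hco] at h0
    have hεe : GPrec (γ - (d : Γ)) (es : Γ) := by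
      have h1 : GPrec (γ - (ds : Γ)) (es : Γ) := by
        have := gprec_neg' hprec
        rwa [neg_sub] at this
      have h2 : GPrec ((ds : Γ) - (d : Γ)) (es : Γ) := by
        have := gprec_neg' htl
        rwa [neg_sub] at this
      have hdecomp : γ - (d : Γ) = (γ - (ds : Γ)) + ((ds : Γ) - (d : Γ)) := by abel
      rw [hdecomp]
      exact gprec_add' h1 h2
    have hB := lemB es hespos hεe
    have hBneg : GPrec (γ - γstar) (es : Γ) := by
      have := gprec_neg' hB
      rwa [neg_sub] at this
    have hdecomp : (ds : Γ) - γstar = ((ds : Γ) - γ) + (γ - γstar) := by abel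
    rw [hdecomp]
    exact gprec_add' hprec hBneg
  -- Claim 1b : any partial development of γstar is a truncation of z
  have hMs : ∀ z', IsPartialDev Δ ι γstar z' → IsTruncS z' z := by
    intro z' hz'
    refine hMax z' ?_
    intro s hs
    obtain ⟨d', e', hd', he', hp'⟩ := hz' s hs
    refine ⟨d', e', hd', he', ?_⟩
    have hepos := hpos_single e' s he'
    rcases not_and_or.1 (hne e') with hc1 | hc2
    · -- impossible case : e' is dominated by ε
      exfalso
      have hall : ∀ n : ℕ, n • |(e' : Γ)| ≤ |γ - (d : Γ)| := by
        intro n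
        by_contra hn
        exact hc1 ⟨n, by push_neg at hn; exact hn⟩
      have h1 : |γstar - (d' : Γ)| < (e' : Γ) := by
        have h2 := hp' 1
        rw [one_nsmul, abs_of_pos hepos, abs_sub_comm] at h2
        exact h2
      have hkey : |γstar - (d : Γ) - ((d' : Γ) - (d : Γ))| < (e' : Γ) := by
        have heq : γstar - (d : Γ) - ((d' : Γ) - (d : Γ)) = γstar - (d' : Γ) := by abel
        rw [heq]
        exact h1
      have hcoe : ((d' - d : Δ) : Γ) = (d' : Γ) - (d : Γ) := by push_cast; ring_nf
      have hboth : |γstar - (d : Γ)| < (e' : Γ) + (e' : Γ) := by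
        rcases not_and_or.1 (hnes (d' - d)) with hA | hB
        · -- the difference d' - d is dominated by γstar - d
          have hallc : ∀ n : ℕ, n • |(d' : Γ) - (d : Γ)| ≤ |γstar - (d : Γ)| := by
            intro n
            by_contra hn
            push_neg at hn
            exact hA ⟨n, by rwa [hcoe]⟩
          have htineq : |γstar - (d : Γ)| ≤
              |γstar - (d : Γ) - ((d' : Γ) - (d : Γ))| + |(d' : Γ) - (d : Γ)| := by
            have heq : γstar - (d : Γ) =
                (γstar - (d : Γ) - ((d' : Γ) - (d : Γ))) + ((d' : Γ) - (d : Γ)) := by abel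
            calc |γstar - (d : Γ)| = _ := by rw [← heq]
              _ ≤ _ := abs_add_le _ _
          have h2c : |(d' : Γ) - (d : Γ)| + |(d' : Γ) - (d : Γ)| ≤ |γstar - (d : Γ)| := by
            have := hallc 2
            rwa [two_nsmul] at this
          have hcb : |(d' : Γ) - (d : Γ)| < (e' : Γ) := by
            have h3 : |(d' : Γ) - (d : Γ)| + |(d' : Γ) - (d : Γ)| ≤
                |γstar - (d : Γ) - ((d' : Γ) - (d : Γ))| + |(d' : Γ) - (d : Γ)| :=
              le_trans h2c htineq
            have h4 : |(d' : Γ) - (d : Γ)| ≤ |γstar - (d : Γ) - ((d' : Γ) - (d : Γ))| :=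
              le_of_add_le_add_right h3
            exact lt_of_le_of_lt h4 hkey
          exact lt_of_le_of_lt htineq (add_lt_add hkey hcb)
        · -- γstar - d is dominated by d' - d
          have hallc : ∀ n : ℕ, n • |γstar - (d : Γ)| ≤ |(d' : Γ) - (d : Γ)| := by
            intro n
            by_contra hn
            push_neg at hn
            rw [← hcoe] at hn
            exact hB ⟨n, hn⟩
          have htineq : |(d' : Γ) - (d : Γ)| ≤
              |γstar - (d : Γ) - ((d' : Γ) - (d : Γ))| + |γstar - (d : Γ)| := by
            have heq : (d' : Γ) - (d : Γ) =
                -(γstar - (d : Γ) - ((d' : Γ) - (d : Γ))) + (γstar - (d : Γ)) := by abel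
            calc |(d' : Γ) - (d : Γ)| = |-(γstar - (d : Γ) - ((d' : Γ) - (d : Γ))) +
                (γstar - (d : Γ))| := by rw [← heq]
              _ ≤ |-(γstar - (d : Γ) - ((d' : Γ) - (d : Γ)))| + |γstar - (d : Γ)| := abs_add_le _ _
              _ = _ := by rw [abs_neg]
          have h2c : |γstar - (d : Γ)| + |γstar - (d : Γ)| ≤ |(d' : Γ) - (d : Γ)| := by
            have := hallc 2
            rwa [two_nsmul] at this
          have h4 : |γstar - (d : Γ)| ≤ |γstar - (d : Γ) - ((d' : Γ) - (d : Γ))| :=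
            le_of_add_le_add_right (le_trans h2c htineq)
          have h5 : |γstar - (d : Γ)| < (e' : Γ) := lt_of_le_of_lt h4 hkey
          calc |γstar - (d : Γ)| < (e' : Γ) := h5
            _ ≤ (e' : Γ) + (e' : Γ) := le_add_of_nonneg_right hepos.le
      have hco3 : ((3 • e' : Δ) : Γ) = (3 : ℕ) • (e' : Γ) := by push_cast; ring_nf
      have h3pos : 0 < (3 : ℕ) • (e' : Γ) := nsmul_pos hepos (by norm_num)
      refine lemC (3 • e') (by rw [hco3]; exact h3pos) ?_ ?_
      · rw [hco3]
        calc |γstar - (d : Γ)| < (e' : Γ) + (e' : Γ) := hboth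
          _ = (2 : ℕ) • (e' : Γ) := (two_nsmul _).symm
          _ < (3 : ℕ) • (e' : Γ) := nsmul_lt_nsmul_left hepos (by omega)
      · rw [hco3]
        refine gprec_of_forall_le' (fun n => ?_) h3pos.ne'
        have habs3 : |(3 : ℕ) • (e' : Γ)| = (3 : ℕ) • |(e' : Γ)| := abs_nsmul _ _
        rw [habs3, smul_smul]
        exact hall _
    · -- e' dominates ε : transfer the development condition
      have hεe : GPrec (γ - (d : Γ)) (e' : Γ) := by
        refine gprec_of_forall_le' (fun n => ?_) hε0
        by_contra hn
        exact hc2 ⟨n, by push_neg at hn; exact hn⟩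
      have hB := lemB e' hepos hεe
      have hdecomp : (d' : Γ) - γ = ((d' : Γ) - γstar) + (γstar - γ) := by abel
      rw [hdecomp]
      exact gprec_add' hp' hB
  exact ⟨hγs, z, d, ⟨hPs, hMs⟩, hιd, hnes⟩
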